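/- arXiv:1211.0031 — 10 statements merged into one kernel-verified Lean document; each statement's English description precedes it below -/
import Mathlib

section
/- Let X be a set, let S ⊆ Bin(X) be a distributive set, and let * ∈ S be invertible in the monoid Bin(X), with inverse *̄. Then S ∪ {*̄} is also a distributive set. -/
universe u

/-- `BinOp X` is the set of all binary operations on `X`. -/
def BinOp (X : Type u) : Type u := X → X → X

namespace BinOp

variable {X : Type u}

/-- `Bin(X)` is a monoid with composition `a (*₁*₂) b = (a *₁ b) *₂ b` and
identity the right-trivial operation `a *₀ b = a`. -/
instance instMonoid : Monoid (BinOp X) where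
  mul f g := fun a b => g (f a b) b
  one := fun a _ => a
  mul_assoc _ _ _ := rfl
  one_mul _ := rfl
  mul_one _ := rfl

/-- The pair `(f, g)` is right distributive: `(a * b) *' c = (a *' c) * (b *' c)`. -/
def RightDistrib (f g : BinOp X) : Prop :=
  ∀ a b c : X, g (f a b) c = f (g a c) (g b c)

/-- A set of binary operations is distributive if every pair of its elements
(possibly equal) is right distributive. -/
def DistribSet (S : Set (BinOp X)) : Prop :=
  ∀ f ∈ S, ∀ g ∈ S, RightDistrib f g

end BinOp

open BinOp in
/-- If `S` is a distributive set and `* ∈ S` is invertible in the monoid `Bin(X)`,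
then `S ∪ {*̄}` is also a distributive set. -/
theorem distribSet_union_inv {X : Type u} (S : Set (BinOp X)) (hS : DistribSet S)
    (u : (BinOp X)ˣ) (hu : (u : BinOp X) ∈ S) :
    DistribSet (S ∪ {((u⁻¹ : (BinOp X)ˣ) : BinOp X)}) := by
  set v : BinOp X := ((u⁻¹ : (BinOp X)ˣ) : BinOp X) with hv
  have hvu : ∀ a b : X, (u : BinOp X) (v a b) b = a := fun a b =>
    congrFun (congrFun u.inv_mul a) b
  have huv : ∀ a b : X, v ((u : BinOp X) a b) b = a := fun a b =>
    congrFun (congrFun u.mul_inv a) b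
  -- `(f, v)` is right distributive for every `f ∈ S`.
  have key2 : ∀ f ∈ S, RightDistrib f v := by
    intro f hf a b c
    calc v (f a b) c
        = v (f ((u : BinOp X) (v a c) c) ((u : BinOp X) (v b c) c)) c := by
          rw [hvu, hvu]
      _ = v ((u : BinOp X) (f (v a c) (v b c)) c) c := by
          rw [hS f hf (u : BinOp X) hu (v a c) (v b c) c]
      _ = f (v a c) (v b c) := huv _ _
  -- `(v, g)` is right distributive for every `g ∈ S`.
  have key3 : ∀ g ∈ S, RightDistrib v g := by
    intro g hg a b c
    have h := hS (u : BinOp X) hu g hg (v a b) b c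
    -- h : g (u (v a b) b) c = u (g (v a b) c) (g b c)
    rw [hvu] at h
    calc g (v a b) c
        = v ((u : BinOp X) (g (v a b) c) (g b c)) (g b c) := (huv _ _).symm
      _ = v (g a c) (g b c) := by rw [← h]
  -- `(v, v)` is right distributive.
  have key4 : RightDistrib v v := by
    intro a b c
    have h := key2 (u : BinOp X) hu (v a b) b c
    -- h : v (u (v a b) b) c = u (v (v a b) c) (v b c)
    rw [hvu] at h
    calc v (v a b) c
        = v ((u : BinOp X) (v (v a b) c) (v b c)) (v b c) := (huv _ _).symm
      _ = v (v a c) (v b c) := by rw [← h]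
  intro f hf g hg
  rcases hf with hf | hf <;> rcases hg with hg | hg
  · exact hS f hf g hg
  · rw [Set.mem_singleton_iff] at hg; subst hg; exact key2 f hf
  · rw [Set.mem_singleton_iff] at hf; subst hf; exact key3 g hg
  · rw [Set.mem_singleton_iff] at hf hg; subst hf; subst hg; exact key4
end

section
/- Let X be a set and let S ⊆ Bin(X) be a distributive set. Then the submonoid M(S) of Bin(X) generated by S is itself a distributive set (a distributive monoid). -/
universe u

open BinOp in
/-- If `S` is a distributive set, then the submonoid of `Bin(X)` generated by `S`
is itself a distributive set. -/
theorem distribSet_submonoid_closure {X : Type u} (S : Set (BinOp X)) (hS : DistribSet S) :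
    DistribSet ((Submonoid.closure S : Submonoid (BinOp X)) : Set (BinOp X)) := by
  intro f hf g hg
  induction hg using Submonoid.closure_induction with
  | one => intro a b c; rfl
  | mul g g' _ _ hgf hg'f =>
      intro a b c
      show g' (g (f a b) c) c = f (g' (g a c) c) (g' (g b c) c)
      rw [hgf, hg'f]
  | mem g hgS =>
      induction hf using Submonoid.closure_induction with
      | one => intro a b c; rfl
      | mem f hfS => exact hS f hfS g hgS
      | mul f f' _ _ hfg hf'g =>
          intro a b c
          show g (f' (f a b) b) c = f' (f (g a c) (g b c)) (g b c)
          rw [hf'g, hfg]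
end

section
/- Let X be a set and let S ⊆ Bin(X) be a distributive set all of whose elements are invertible in the monoid Bin(X). Then the subgroup G(S) of the group of units of Bin(X) generated by S is itself a distributive set (a distributive group). -/
universe u

namespace BinOp

variable {X : Type u}

lemma rd_one_left (g : BinOp X) : RightDistrib 1 g := fun _ _ _ => rfl

lemma rd_one_right (f : BinOp X) : RightDistrib f 1 := fun _ _ _ => rfl

lemma rd_mul_left {f f' g : BinOp X} (h : RightDistrib f g) (h' : RightDistrib f' g) :
    RightDistrib (f * f') g := fun a b c => by
  show g (f' (f a b) b) c = f' (f (g a c) (g b c)) (g b c)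
  rw [h', h]

lemma rd_mul_right {f g g' : BinOp X} (h : RightDistrib f g) (h' : RightDistrib f g') :
    RightDistrib f (g * g') := fun a b c => by
  show g' (g (f a b) c) c = f (g' (g a c) c) (g' (g b c) c)
  rw [h, h']

lemma rd_inv_left {f fi g : BinOp X} (hfi : f * fi = 1) (hif : fi * f = 1)
    (h : RightDistrib f g) : RightDistrib fi g := fun a b c => by
  have e1 : ∀ x y, fi (f x y) y = x := fun x y => congrFun (congrFun hfi x) y
  have e2 : ∀ x y, f (fi x y) y = x := fun x y => congrFun (congrFun hif x) y
  calc g (fi a b) c = fi (f (g (fi a b) c) (g b c)) (g b c) := (e1 _ _).symm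
    _ = fi (g (f (fi a b) b) c) (g b c) := by rw [h]
    _ = fi (g a c) (g b c) := by rw [e2]

lemma rd_inv_right {f g gi : BinOp X} (hgi : g * gi = 1) (hig : gi * g = 1)
    (h : RightDistrib f g) : RightDistrib f gi := fun a b c => by
  have e1 : ∀ x y, gi (g x y) y = x := fun x y => congrFun (congrFun hgi x) y
  have e2 : ∀ x y, g (gi x y) y = x := fun x y => congrFun (congrFun hig x) y
  have key : g (f (gi a c) (gi b c)) c = f a b := by rw [h, e2, e2]
  calc gi (f a b) c = gi (g (f (gi a c) (gi b c)) c) c := by rw [key]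
    _ = f (gi a c) (gi b c) := e1 _ _

end BinOp

open BinOp in
/-- If `S` is a distributive set of invertible operations, then the subgroup of the
group of units of `Bin(X)` generated by `S` is itself a distributive set. -/
theorem distribSet_subgroup_closure {X : Type u} (S : Set (BinOp X)) (hS : DistribSet S)
    (hinv : ∀ f ∈ S, IsUnit f) :
    DistribSet ((fun u : (BinOp X)ˣ => (u : BinOp X)) ''
      ((Subgroup.closure {u : (BinOp X)ˣ | (u : BinOp X) ∈ S} :
        Subgroup (BinOp X)ˣ) : Set (BinOp X)ˣ)) := by
  rintro f ⟨u, hu, rfl⟩ g ⟨v, hv, rfl⟩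
  set T : Set (BinOp X)ˣ := {u : (BinOp X)ˣ | (u : BinOp X) ∈ S} with hT
  -- pairwise predicate
  let P : (BinOp X)ˣ → (BinOp X)ˣ → Prop :=
    fun u v => RightDistrib (u : BinOp X) (v : BinOp X) ∧
      RightDistrib (v : BinOp X) (u : BinOp X)
  have Pmul_left : ∀ {u u' v}, P u v → P u' v → P (u * u') v := by
    rintro u u' v ⟨h1, h2⟩ ⟨h3, h4⟩
    exact ⟨rd_mul_left h1 h3, rd_mul_right h2 h4⟩
  have Pinv_left : ∀ {u v}, P u v → P u⁻¹ v := by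
    rintro u v ⟨h1, h2⟩
    exact ⟨rd_inv_left u.val_inv u.inv_val h1, rd_inv_right u.val_inv u.inv_val h2⟩
  have Pone_left : ∀ v, P 1 v := fun v => ⟨rd_one_left _, rd_one_right _⟩
  have Psymm : ∀ {u v}, P u v → P v u := fun h => ⟨h.2, h.1⟩
  -- step 1 : every element of the closure is P-related to every element of T
  have step1 : ∀ u ∈ Subgroup.closure T, ∀ v ∈ T, P u v := by
    intro u hu v hv
    refine Subgroup.closure_induction (p := fun u _ => P u v) ?_ (Pone_left v) ?_ ?_ hu
    · intro x hx; exact ⟨hS x hx v hv, hS v hv x hx⟩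
    · intro x y _ _ hx hy; exact Pmul_left hx hy
    · intro x _ hx; exact Pinv_left hx
  -- step 2 : every two elements of the closure are P-related
  have step2 : ∀ u ∈ Subgroup.closure T, ∀ v ∈ Subgroup.closure T, P u v := by
    intro u hu v hv
    refine Subgroup.closure_induction (p := fun v _ => P u v) ?_
      (Psymm (Pone_left u)) ?_ ?_ hv
    · intro x hx; exact step1 u hu x hx
    · intro x y _ _ hx hy; exact Psymm (Pmul_left (Psymm hx) (Psymm hy))
    · intro x _ hx; exact Psymm (Pinv_left (Psymm hx))
  exact (step2 u hu v hv).1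
end

section
/- Let X be a set and let *α, *β ∈ Bin(X) be such that *β is idempotent (a *β a = a for all a ∈ X) and the pair (*α, *β) is right distributive, i.e. (a *α b) *β c = (a *β c) *α (b *β c) for all a, b, c ∈ X. Then *α and *β commute in the monoid Bin(X): (a *α b) *β b = (a *β b) *α b for all a, b ∈ X. -/
universe u

open BinOp in
/-- If `*β` is idempotent and the pair `(*α, *β)` is right distributive, then
`*α` and `*β` commute in the monoid `Bin(X)`:
`(a *α b) *β b = (a *β b) *α b` for all `a, b`. -/
theorem idempotent_rightDistrib_comm {X : Type u} (f g : BinOp X)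
    (hg : ∀ a : X, g a a = a) (hd : RightDistrib f g) :
    ∀ a b : X, g (f a b) b = f (g a b) b := by
  intro a b
  rw [hd, hg]
end

section
/- Let X be a set and let M ⊆ Bin(X) be a distributive monoid (a submonoid of Bin(X) which is a distributive set). If *β ∈ M is an idempotent operation (a *β a = a for all a ∈ X), then *β lies in the center of M: *α*β = *β*α in Bin(X) for every *α ∈ M. -/
universe u

open BinOp in
/-- If `M` is a distributive monoid and `*β ∈ M` is idempotent, then `*β` is in the
center of `M`: `*α*β = *β*α` in `Bin(X)` for every `*α ∈ M`. -/
theorem idempotent_mem_center {X : Type u} (M : Submonoid (BinOp X))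
    (hM : DistribSet (M : Set (BinOp X)))
    (g : BinOp X) (hgM : g ∈ M) (hg : ∀ a : X, g a a = a) :
    ∀ f ∈ M, f * g = g * f := by
  intro f hf
  funext a b
  show g (f a b) b = f (g a b) b
  rw [hM f hf g hgM a b b, hg b]
end

section
/- Let X be a set and let M ⊆ Bin(X) be a distributive monoid all of whose elements are idempotent operations (a * a = a for all a ∈ X and all * ∈ M). Then M is commutative: *α*β = *β*α in Bin(X) for all *α, *β ∈ M. -/
universe u

open BinOp in
/-- A distributive monoid all of whose elements are idempotent operations is
commutative. -/
theorem distribMonoid_idempotent_comm {X : Type u} (M : Submonoid (BinOp X))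
    (hM : DistribSet (M : Set (BinOp X)))
    (hidem : ∀ f ∈ M, ∀ a : X, f a a = a) :
    ∀ f ∈ M, ∀ g ∈ M, f * g = g * f := by
  intro f hf g hg
  funext a b
  show g (f a b) b = f (g a b) b
  rw [hM f hf g hg a b b, hidem g hg b]
end

section
/- Let G be a group and, for each g ∈ G, define the binary operation *_g on G by a *_g b = a b⁻¹ g b. Then the map φ^reg : G → Bin(G), φ^reg(g) = *_g, is a monoid homomorphism from G to the monoid Bin(G): φ^reg(1) is the right-trivial operation a *₀ b = a, and for all g₁, g₂ ∈ G, *_{g₁g₂} equals the composition *_{g₁}*_{g₂}, i.e. a *_{g₁g₂} b = (a *_{g₁} b) *_{g₂} b for all a, b ∈ G. -/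
universe u

/-- The regular embedding operation: `a *_g b = a b⁻¹ g b`. -/
def regularOp {G : Type u} [Group G] (g : G) : BinOp G := fun a b => a * b⁻¹ * g * b

/-- The map `φ^reg : g ↦ *_g` is a monoid homomorphism from `G` to `Bin(G)`:
`φ^reg(1)` is the right-trivial operation, and `*_{g₁g₂} = *_{g₁}*_{g₂}`,
i.e. `a *_{g₁g₂} b = (a *_{g₁} b) *_{g₂} b`. -/
theorem regularOp_monoidHom (G : Type u) [Group G] :
    regularOp (1 : G) = (1 : BinOp G) ∧
    ∀ g₁ g₂ : G, regularOp (g₁ * g₂) = regularOp g₁ * regularOp g₂ := by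
  constructor
  · funext a b
    simp [regularOp, BinOp.instMonoid]
    rfl
  · intro g₁ g₂
    funext a b
    show a * b⁻¹ * (g₁ * g₂) * b = a * b⁻¹ * g₁ * b * b⁻¹ * g₂ * b
    group
end

section
/- Let G be a group and, for each g ∈ G, define the binary operation *_g on G by a *_g b = a b⁻¹ g b. Then for every g ∈ G, the operation *_g is invertible in the monoid Bin(G), with inverse *_{g⁻¹}; that is, *_g *_{g⁻¹} and *_{g⁻¹} *_g both equal the right-trivial operation a *₀ b = a. -/
universe u

/-- Each `*_g` is invertible in the monoid `Bin(G)`, with inverse `*_{g⁻¹}`: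
both compositions `*_g *_{g⁻¹}` and `*_{g⁻¹} *_g` are the right-trivial operation. -/
theorem regularOp_isUnit (G : Type u) [Group G] (g : G) :
    IsUnit (regularOp g) ∧
    regularOp g * regularOp g⁻¹ = (1 : BinOp G) ∧
    regularOp g⁻¹ * regularOp g = (1 : BinOp G) := by
  have h1 : regularOp g * regularOp g⁻¹ = (1 : BinOp G) := by
    funext a b
    show (regularOp g a b) * b⁻¹ * g⁻¹ * b = a
    simp [regularOp, mul_assoc]
  have h2 : regularOp g⁻¹ * regularOp g = (1 : BinOp G) := by
    funext a b
    show (regularOp g⁻¹ a b) * b⁻¹ * g * b = a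
    simp [regularOp, mul_assoc]
  exact ⟨⟨⟨regularOp g, regularOp g⁻¹, h1, h2⟩, rfl⟩, h1, h2⟩
end

section
/- Every group G embeds into Bin(G): the map φ^reg : G → Bin(G) sending g to the operation *_g defined by a *_g b = a b⁻¹ g b is an injective monoid homomorphism from G into the monoid Bin(G) whose image is a distributive set consisting of invertible operations. -/
universe u

open BinOp in
/-- Regular embedding: every group `G` embeds in `Bin(G)` via `g ↦ *_g` with
`a *_g b = a b⁻¹ g b`; this is an injective monoid homomorphism whose image is a
distributive set of invertible operations. -/
theorem regular_embedding (G : Type u) [Group G] :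
    Function.Injective (regularOp (G := G)) ∧
    regularOp (1 : G) = (1 : BinOp G) ∧
    (∀ g₁ g₂ : G, regularOp (g₁ * g₂) = regularOp g₁ * regularOp g₂) ∧
    DistribSet (Set.range (regularOp (G := G))) ∧
    (∀ g : G, IsUnit (regularOp g)) := by
  have hmul : ∀ g₁ g₂ : G, regularOp (g₁ * g₂) = regularOp g₁ * regularOp g₂ := by
    intro g₁ g₂
    funext a b
    show a * b⁻¹ * (g₁ * g₂) * b = (a * b⁻¹ * g₁ * b) * b⁻¹ * g₂ * b
    group
  have hone : regularOp (1 : G) = (1 : BinOp G) := by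
    funext a b
    show a * b⁻¹ * 1 * b = a
    group
  refine ⟨?_, hone, hmul, ?_, ?_⟩
  · intro g₁ g₂ h
    have := congrFun (congrFun h 1) 1
    simpa [regularOp] using this
  · rintro f ⟨g₁, rfl⟩ g ⟨g₂, rfl⟩ a b c
    show (a * b⁻¹ * g₁ * b) * c⁻¹ * g₂ * c =
      (a * c⁻¹ * g₂ * c) * (b * c⁻¹ * g₂ * c)⁻¹ * g₁ * (b * c⁻¹ * g₂ * c)
    group
  · intro g
    exact ⟨⟨regularOp g, regularOp g⁻¹,
      by rw [← hmul, mul_inv_cancel, hone], by rw [← hmul, inv_mul_cancel, hone]⟩, rfl⟩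
end

section
/- Let X = {0,1,2,3,4,5} and define the binary operations *_τ and *_σ on X by the tables (with i * j in row i, column j): for *_τ the rows are (1,1,3,5,5,3), (0,0,4,2,2,4), (3,3,5,1,1,5), (2,2,0,4,4,0), (5,5,1,3,3,1), (4,4,2,0,0,2); for *_σ the rows are (2,4,2,4,2,4), (5,3,5,3,5,3), (4,0,4,0,4,0), (1,5,1,5,1,5), (0,2,0,2,0,2), (3,1,3,1,3,1). Then {*_τ, *_σ} is a distributive set of invertible operations in Bin(X), and the subgroup of the group of units of Bin(X) generated by *_τ and *_σ is non-abelian (it is isomorphic to the dihedral group D_{2·3} ≅ S_3). -/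
universe u

/-- Berman's reflection operation `*_τ` on `X = {0,…,5}`, given by its table
(row `i`, column `j` is `i *_τ j`). -/
def tauOp : BinOp (Fin 6) := fun i j =>
  ![![1,1,3,5,5,3],
    ![0,0,4,2,2,4],
    ![3,3,5,1,1,5],
    ![2,2,0,4,4,0],
    ![5,5,1,3,3,1],
    ![4,4,2,0,0,2]] i j

/-- Berman's `3`-cycle operation `*_σ` on `X = {0,…,5}`, given by its table
(row `i`, column `j` is `i *_σ j`). -/
def sigmaOp : BinOp (Fin 6) := fun i j =>
  ![![2,4,2,4,2,4],
    ![5,3,5,3,5,3],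
    ![4,0,4,0,4,0],
    ![1,5,1,5,1,5],
    ![0,2,0,2,0,2],
    ![3,1,3,1,3,1]] i j

instance : DecidableEq (BinOp (Fin 6)) :=
  inferInstanceAs (DecidableEq (Fin 6 → Fin 6 → Fin 6))

/-- `tauOp` as a unit (it is an involution). -/
def uTau : (BinOp (Fin 6))ˣ :=
  ⟨tauOp, tauOp, by decide, by decide⟩

/-- `sigmaOp` as a unit (it has order 3). -/
def uSigma : (BinOp (Fin 6))ˣ :=
  ⟨sigmaOp, sigmaOp * sigmaOp, by decide, by decide⟩

lemma uTau_sq : uTau * uTau = 1 := by rw [Units.ext_iff]; decide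

lemma uSigma_cube : uSigma ^ 3 = 1 := by rw [Units.ext_iff]; decide

lemma uSigma_uTau : uSigma * uTau = uTau * uSigma ^ 2 := by rw [Units.ext_iff]; decide

lemma pow_congr {a b : ℕ} (h : a % 3 = b % 3) : uSigma ^ a = uSigma ^ b := by
  rw [pow_eq_pow_mod a uSigma_cube, pow_eq_pow_mod b uSigma_cube, h]

lemma comm_pow (k : ℕ) : uSigma ^ k * uTau = uTau * uSigma ^ (2 * k) := by
  induction k with
  | zero => simp
  | succ n ih =>
    calc uSigma ^ (n + 1) * uTau = uSigma ^ n * (uSigma * uTau) := by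
          rw [pow_succ, mul_assoc]
      _ = uSigma ^ n * uTau * uSigma ^ 2 := by rw [uSigma_uTau, mul_assoc]
      _ = uTau * (uSigma ^ (2 * n) * uSigma ^ 2) := by rw [ih, mul_assoc]
      _ = uTau * uSigma ^ (2 * (n + 1)) := by rw [← pow_add]; ring_nf

lemma val_sub_aux : ∀ i j : ZMod 3, (j - i).val % 3 = (2 * i.val + j.val) % 3 := by decide

/-- The underlying function of the homomorphism `D₃ → (Bin X)ˣ`. -/
def phiFun : DihedralGroup 3 → (BinOp (Fin 6))ˣ
  | .r i => uSigma ^ i.val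
  | .sr i => uTau * uSigma ^ i.val

/-- The homomorphism `D₃ → (Bin X)ˣ` sending `r 1 ↦ uSigma` and `sr 0 ↦ uTau`. -/
def phi : DihedralGroup 3 →* (BinOp (Fin 6))ˣ where
  toFun := phiFun
  map_one' := by
    show uSigma ^ (0 : ZMod 3).val = 1
    simp [ZMod.val_zero]
  map_mul' := by
    rintro (i | i) (j | j)
    · show uSigma ^ ((i + j).val) = uSigma ^ i.val * uSigma ^ j.val
      rw [← pow_add]
      exact pow_congr (by have := ZMod.val_add i j; omega)
    · show uTau * uSigma ^ ((j - i).val) = uSigma ^ i.val * (uTau * uSigma ^ j.val)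
      rw [← mul_assoc, comm_pow, mul_assoc, ← pow_add]
      exact congrArg _ (pow_congr (val_sub_aux i j))
    · show uTau * uSigma ^ ((i + j).val) = uTau * uSigma ^ i.val * uSigma ^ j.val
      rw [mul_assoc, ← pow_add]
      exact congrArg _ (pow_congr (by have := ZMod.val_add i j; omega))
    · show uSigma ^ ((j - i).val) = uTau * uSigma ^ i.val * (uTau * uSigma ^ j.val)
      rw [mul_assoc, ← mul_assoc (uSigma ^ i.val), comm_pow, ← mul_assoc, ← mul_assoc,
        uTau_sq, one_mul, ← pow_add]
      exact pow_congr (val_sub_aux i j)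

instance : DecidableEq (BinOp (Fin 6))ˣ :=
  fun a b => decidable_of_iff _ Units.ext_iff.symm

lemma phi_injective : Function.Injective phi := by decide

lemma phi_range : phi.range = Subgroup.closure {uTau, uSigma} := by
  apply le_antisymm
  · rintro x ⟨y, rfl⟩
    cases y with
    | r i =>
      exact pow_mem (Subgroup.subset_closure (by simp)) _
    | sr i =>
      exact mul_mem (Subgroup.subset_closure (by simp))
        (pow_mem (Subgroup.subset_closure (by simp)) _)
  · rw [Subgroup.closure_le]
    rintro x (rfl | rfl)
    · exact ⟨.sr 0, by show uTau * uSigma ^ (0 : ZMod 3).val = uTau; simp [ZMod.val_zero]⟩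
    · exact ⟨.r 1, by show uSigma ^ (1 : ZMod 3).val = uSigma; rw [ZMod.val_one, pow_one]⟩

open BinOp in
/-- `{*_τ, *_σ}` is a distributive set of invertible operations in `Bin(X)` for
`|X| = 6`, and the subgroup of the group of units of `Bin(X)` generated by them is
non-abelian, isomorphic to the dihedral group `D_{2·3} ≅ S₃`. -/
theorem berman_nonabelian_distributive_subgroup :
    ∃ uτ uσ : (BinOp (Fin 6))ˣ,
      (uτ : BinOp (Fin 6)) = tauOp ∧
      (uσ : BinOp (Fin 6)) = sigmaOp ∧
      DistribSet {tauOp, sigmaOp} ∧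
      (∃ a ∈ Subgroup.closure {uτ, uσ}, ∃ b ∈ Subgroup.closure {uτ, uσ}, a * b ≠ b * a) ∧
      Nonempty ((Subgroup.closure {uτ, uσ} : Subgroup (BinOp (Fin 6))ˣ) ≃* DihedralGroup 3) := by
  refine ⟨uTau, uSigma, rfl, rfl, ?_, ?_, ?_⟩
  · intro f hf g hg
    simp only [Set.mem_insert_iff, Set.mem_singleton_iff] at hf hg
    rcases hf with rfl | rfl <;> rcases hg with rfl | rfl <;> (unfold BinOp.RightDistrib; decide)
  · exact ⟨uTau, Subgroup.subset_closure (by simp), uSigma, Subgroup.subset_closure (by simp),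
      by rw [Ne, Units.ext_iff]; decide⟩
  · exact ⟨(MulEquiv.subgroupCongr phi_range.symm).trans (MonoidHom.ofInjective phi_injective).symm⟩
end
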